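/- arXiv:1907.08697 — 6 statements merged into one kernel-verified Lean document; each statement's English description precedes it below -/
import Mathlib

section
/- (Theorem 1) Let L and N be real d×p matrices with d ≥ 2, and set Z = L Nᵀ. Then the minimum of ‖L − G N‖_F² over all extended orthogonal Givens transformations G (over all index pairs i < j and all 2×2 orthogonal blocks) equals ‖L‖_F² + ‖N‖_F² − 2·(tr(Z) + max_{i<j} C_ij(Z)), where C_ij(Z) = ‖Z_{⟨i,j⟩}‖_* − tr(Z_{⟨i,j⟩}). The minimum is attained by the transformation acting on a pair (i*, j*) maximizing C_ij(Z) whose 2×2 block G̃ satisfies tr(G̃ᵀ Z_{⟨i*,j*⟩}) = ‖Z_{⟨i*,j*⟩}‖_*. -/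
open Matrix

/-- Squared Frobenius norm of a real matrix. -/
def frobSq {m n : ℕ} (A : Matrix (Fin m) (Fin n) ℝ) : ℝ := ∑ i, ∑ j, (A i j) ^ 2

/-- The singular values of a real square matrix `A`: the square roots of the
eigenvalues of `AᵀA` (here `Aᴴ = Aᵀ` since the matrix is real). -/
noncomputable def singVals {n : ℕ} (A : Matrix (Fin n) (Fin n) ℝ) : Fin n → ℝ :=
  fun i => Real.sqrt ((Matrix.isHermitian_conjTranspose_mul_self A).eigenvalues i)

/-- The nuclear norm of a real square matrix: the sum of its singular values. -/
noncomputable def nuclearNorm {n : ℕ} (A : Matrix (Fin n) (Fin n) ℝ) : ℝ :=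
  ∑ i, singVals A i

lemma sum_eig {n : ℕ} (A : Matrix (Fin n) (Fin n) ℝ) (hA : A.IsHermitian) :
    ∑ i, hA.eigenvalues i = A.trace := by
  rw [hA.trace_eq_sum_eigenvalues]
  simp

lemma nuc2 (A : Matrix (Fin 2) (Fin 2) ℝ) :
    nuclearNorm A = Real.sqrt (frobSq A + 2 * |A.det|) := by
  have hH := Matrix.isHermitian_conjTranspose_mul_self A
  have hPSD : (Aᵀ * A).PosSemidef := by
    have := Matrix.posSemidef_conjTranspose_mul_self A
    rwa [Matrix.conjTranspose_eq_transpose_of_trivial] at this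
  have h0 : 0 ≤ hH.eigenvalues 0 := hPSD.eigenvalues_nonneg 0
  have h1 : 0 ≤ hH.eigenvalues 1 := hPSD.eigenvalues_nonneg 1
  have hsum : hH.eigenvalues 0 + hH.eigenvalues 1 = frobSq A := by
    have := sum_eig (Aᵀ * A) hH
    rw [Fin.sum_univ_two] at this
    refine this.trans ?_
    simp [frobSq, Matrix.trace, Matrix.diag, Matrix.mul_apply, Fin.sum_univ_two, sq]
    ring
  have hprod : hH.eigenvalues 0 * hH.eigenvalues 1 = A.det ^ 2 := by
    have h' : (Aᵀ * A).det = hH.eigenvalues 0 * hH.eigenvalues 1 := by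
      have := hH.det_eq_prod_eigenvalues
      rw [Fin.prod_univ_two] at this
      rw [← Matrix.conjTranspose_eq_transpose_of_trivial A]
      simpa using this
    rw [← h', Matrix.det_mul, Matrix.det_transpose, sq]
  have hnuc : nuclearNorm A = Real.sqrt (hH.eigenvalues 0) + Real.sqrt (hH.eigenvalues 1) := by
    simp [nuclearNorm, singVals, Fin.sum_univ_two]
  have hsq : (Real.sqrt (hH.eigenvalues 0) + Real.sqrt (hH.eigenvalues 1)) ^ 2
      = frobSq A + 2 * |A.det| := by
    have hm : Real.sqrt (hH.eigenvalues 0) * Real.sqrt (hH.eigenvalues 1) = |A.det| := by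
      rw [← Real.sqrt_mul h0, hprod, Real.sqrt_sq_eq_abs]
    rw [add_sq, Real.sq_sqrt h0, Real.sq_sqrt h1]
    nlinarith [hsum, hm]
  rw [hnuc, ← hsq, Real.sqrt_sq (by positivity)]


-- helper: Cauchy-Schwarz step
lemma cs_step (c s x y B : ℝ) (h : c ^ 2 + s ^ 2 = 1) (hB : x ^ 2 + y ^ 2 ≤ B) :
    c * x + s * y ≤ Real.sqrt B := by
  have h1 : (c * x + s * y) ^ 2 ≤ x ^ 2 + y ^ 2 := by nlinarith [sq_nonneg (c * y - s * x)]
  calc c * x + s * y ≤ |c * x + s * y| := le_abs_self _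
    _ = Real.sqrt ((c * x + s * y) ^ 2) := (Real.sqrt_sq_eq_abs _).symm
    _ ≤ Real.sqrt B := Real.sqrt_le_sqrt (by linarith)

lemma frob2 (A : Matrix (Fin 2) (Fin 2) ℝ) :
    frobSq A = A 0 0 ^ 2 + A 0 1 ^ 2 + A 1 0 ^ 2 + A 1 1 ^ 2 := by
  simp [frobSq, Fin.sum_univ_two]; ring

lemma rot_le (A : Matrix (Fin 2) (Fin 2) ℝ) (c s : ℝ) (h : c ^ 2 + s ^ 2 = 1) :
    c * (A 0 0 + A 1 1) + s * (A 1 0 - A 0 1) ≤ nuclearNorm A := by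
  rw [nuc2]
  apply cs_step _ _ _ _ _ h
  rw [frob2, Matrix.det_fin_two]
  nlinarith [le_abs_self (A 0 0 * A 1 1 - A 0 1 * A 1 0)]

lemma refl_le (A : Matrix (Fin 2) (Fin 2) ℝ) (c s : ℝ) (h : c ^ 2 + s ^ 2 = 1) :
    c * (A 0 0 - A 1 1) + s * (A 0 1 + A 1 0) ≤ nuclearNorm A := by
  rw [nuc2]
  apply cs_step _ _ _ _ _ h
  rw [frob2, Matrix.det_fin_two]
  nlinarith [neg_abs_le (A 0 0 * A 1 1 - A 0 1 * A 1 0)]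

/-- Existence of an optimal orthogonal 2×2 block. -/
lemma exists_opt (A : Matrix (Fin 2) (Fin 2) ℝ) :
    ∃ B : Matrix (Fin 2) (Fin 2) ℝ,
      (∃ c s : ℝ, c ^ 2 + s ^ 2 = 1 ∧
        (B = !![c, -s; s, c] ∨ B = !![c, s; s, -c])) ∧
      (Bᵀ * A).trace = nuclearNorm A := by
  have hval : ∀ (B : Matrix (Fin 2) (Fin 2) ℝ),
      (Bᵀ * A).trace = B 0 0 * A 0 0 + B 1 0 * A 1 0 + B 0 1 * A 0 1 + B 1 1 * A 1 1 := by
    intro B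
    simp [Matrix.trace_fin_two, Matrix.mul_apply, Fin.sum_univ_two]
    ring
  rcases le_or_gt 0 A.det with hdet | hdet
  · -- rotation
    set x := A 0 0 + A 1 1 with hx
    set y := A 1 0 - A 0 1 with hy
    have hnuc : nuclearNorm A = Real.sqrt (x ^ 2 + y ^ 2) := by
      rw [nuc2, abs_of_nonneg hdet, frob2, Matrix.det_fin_two]
      congr 1; rw [hx, hy]; ring
    rcases eq_or_lt_of_le (Real.sqrt_nonneg (x ^ 2 + y ^ 2)) with hr | hr
    · refine ⟨!![1, 0; 0, 1], ⟨1, 0, by norm_num, Or.inl (by norm_num)⟩, ?_⟩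
      have hxy : x ^ 2 + y ^ 2 = 0 := by
        have := Real.sqrt_eq_zero' (x := x ^ 2 + y ^ 2)
        have h0 : Real.sqrt (x ^ 2 + y ^ 2) = 0 := hr.symm
        nlinarith [Real.sq_sqrt (by positivity : (0:ℝ) ≤ x ^ 2 + y ^ 2), sq_nonneg x, sq_nonneg y]
      have hx0 : x = 0 := by nlinarith [sq_nonneg x, sq_nonneg y]
      rw [hval, hnuc, ← hr]
      norm_num
      rw [hx] at hx0; linarith
    · set r := Real.sqrt (x ^ 2 + y ^ 2) with hrdef
      have hr2 : r ^ 2 = x ^ 2 + y ^ 2 := Real.sq_sqrt (by positivity)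
      have hrpos := hr
      refine ⟨!![x / r, -(y / r); y / r, x / r],
        ⟨x / r, y / r, by field_simp; linarith, Or.inl rfl⟩, ?_⟩
      rw [hval, hnuc]
      norm_num
      have key : x * A 0 0 + y * A 1 0 + -(y * A 0 1) + x * A 1 1 = x ^ 2 + y ^ 2 := by
        rw [hx, hy]; ring
      field_simp
      nlinarith [key, hr2]
  · -- reflection
    set x := A 0 0 - A 1 1 with hx
    set y := A 0 1 + A 1 0 with hy
    have hnuc : nuclearNorm A = Real.sqrt (x ^ 2 + y ^ 2) := by
      rw [nuc2, abs_of_neg hdet, frob2, Matrix.det_fin_two]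
      congr 1; rw [hx, hy]; ring
    have hpos : 0 < x ^ 2 + y ^ 2 := by
      rcases lt_trichotomy (x ^ 2 + y ^ 2) 0 with h | h | h
      · nlinarith [sq_nonneg x, sq_nonneg y]
      · exfalso
        have hx0 : x = 0 := by nlinarith [sq_nonneg x, sq_nonneg y]
        have hy0 : y = 0 := by nlinarith [sq_nonneg x, sq_nonneg y]
        rw [Matrix.det_fin_two] at hdet
        rw [hx] at hx0; rw [hy] at hy0
        have h11 : A 1 1 = A 0 0 := by linarith
        have h01 : A 0 1 = -(A 1 0) := by linarith
        rw [h11, h01] at hdet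
        nlinarith [sq_nonneg (A 0 0), sq_nonneg (A 1 0)]
      · exact h
    set r := Real.sqrt (x ^ 2 + y ^ 2) with hrdef
    have hrpos : 0 < r := Real.sqrt_pos.mpr hpos
    have hr2 : r ^ 2 = x ^ 2 + y ^ 2 := Real.sq_sqrt (by positivity)
    refine ⟨!![x / r, y / r; y / r, -(x / r)],
      ⟨x / r, y / r, by field_simp; linarith, Or.inr rfl⟩, ?_⟩
    rw [hval, hnuc]
    norm_num
    have key : x * A 0 0 + y * A 1 0 + y * A 0 1 + -(x * A 1 1) = x ^ 2 + y ^ 2 := by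
      rw [hx, hy]; ring
    field_simp
    nlinarith [key, hr2]


/-- The 2×2 submatrix `Z_{⟨i,j⟩} = [[Z_ii, Z_ij],[Z_ji, Z_jj]]`. -/
def sub2 {d : ℕ} (Z : Matrix (Fin d) (Fin d) ℝ) (i j : Fin d) : Matrix (Fin 2) (Fin 2) ℝ :=
  !![Z i i, Z i j; Z j i, Z j j]

/-- The score `C_ij(Z) = ‖Z_{⟨i,j⟩}‖_* − tr(Z_{⟨i,j⟩})`. -/
noncomputable def score {d : ℕ} (Z : Matrix (Fin d) (Fin d) ℝ) (i j : Fin d) : ℝ :=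
  nuclearNorm (sub2 Z i j) - (sub2 Z i j).trace

/-- An extended orthogonal Givens transformation on indices `i < j`: equal to the identity
except for the 2×2 block on rows/columns `i, j`, which is either a rotation
`[[c, −s],[s, c]]` or a reflection `[[c, s],[s, −c]]` with `c² + s² = 1`. -/
def IsExtGivens {d : ℕ} (i j : Fin d) (G : Matrix (Fin d) (Fin d) ℝ) : Prop :=
  (∃ c s : ℝ, c ^ 2 + s ^ 2 = 1 ∧
    ((G i i = c ∧ G i j = -s ∧ G j i = s ∧ G j j = c) ∨
     (G i i = c ∧ G i j = s ∧ G j i = s ∧ G j j = -c))) ∧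
  (∀ k, k ≠ i → k ≠ j → G k k = 1) ∧
  (∀ k l, k ≠ l → ¬(k = i ∧ l = j) → ¬(k = j ∧ l = i) → G k l = 0)

/-- A Givens rotation on indices `i < j`. -/
def IsGivensRotation {d : ℕ} (i j : Fin d) (G : Matrix (Fin d) (Fin d) ℝ) : Prop :=
  (∃ c s : ℝ, c ^ 2 + s ^ 2 = 1 ∧
    G i i = c ∧ G i j = -s ∧ G j i = s ∧ G j j = c) ∧
  (∀ k, k ≠ i → k ≠ j → G k k = 1) ∧
  (∀ k l, k ≠ l → ¬(k = i ∧ l = j) → ¬(k = j ∧ l = i) → G k l = 0)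


section Struct

variable {d p : ℕ}

lemma sub2_trace (Z : Matrix (Fin d) (Fin d) ℝ) (i j : Fin d) :
    (sub2 Z i j).trace = Z i i + Z j j := by
  simp [sub2, Matrix.trace_fin_two]

lemma sub2_block_trace (G Z : Matrix (Fin d) (Fin d) ℝ) (i j : Fin d) :
    ((sub2 G i j)ᵀ * sub2 Z i j).trace =
      G i i * Z i i + G j i * Z j i + G i j * Z i j + G j j * Z j j := by
  simp [sub2, Matrix.trace_fin_two, Matrix.mul_apply, Matrix.transpose_apply,
    Fin.sum_univ_two, Matrix.vecHead, Matrix.vecTail]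
  ring

lemma extGivens_orthogonal {i j : Fin d} {G : Matrix (Fin d) (Fin d) ℝ} (hij : i ≠ j)
    (hG : IsExtGivens i j G) : Gᵀ * G = 1 := by
  obtain ⟨⟨c, s, hcs, hform⟩, hdiag, hoff⟩ := hG
  have hred : ∀ k l : Fin d, (k = i ∨ k = j) → (l = i ∨ l = j) →
      ∑ m, G m k * G m l = G i k * G i l + G j k * G j l := by
    intro k l hk hl
    rw [← Finset.sum_subset (Finset.subset_univ ({i, j} : Finset (Fin d)))
      (fun m _ hm => ?_), Finset.sum_pair hij]
    have hmi : m ≠ i := fun h => hm (by simp [h])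
    have hmj : m ≠ j := fun h => hm (by simp [h])
    have hmk : m ≠ k := by rcases hk with rfl | rfl <;> assumption
    rw [hoff m k hmk (by rintro ⟨rfl, rfl⟩; exact hmi rfl)
      (by rintro ⟨rfl, rfl⟩; exact hmj rfl), zero_mul]
  ext k l
  rw [Matrix.mul_apply]
  simp only [Matrix.transpose_apply]
  by_cases hk : k = i ∨ k = j
  · by_cases hl : l = i ∨ l = j
    · rw [hred k l hk hl]
      rcases hk with rfl | rfl <;> rcases hl with rfl | rfl <;>
        rcases hform with ⟨h1, h2, h3, h4⟩ | ⟨h1, h2, h3, h4⟩ <;>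
        simp only [h1, h2, h3, h4] <;>
        first
          | (rw [Matrix.one_apply_eq]; nlinarith [hcs])
          | (rw [Matrix.one_apply_ne (by first | exact hij | exact hij.symm)]; ring)
    · push_neg at hl
      have hkl : k ≠ l := by
        intro h; rcases hk with rfl | rfl
        · exact hl.1 h.symm
        · exact hl.2 h.symm
      rw [Finset.sum_eq_single l, Matrix.one_apply_ne hkl]
      · rw [hoff l k (fun h => hkl h.symm) (by rintro ⟨rfl, rfl⟩; exact hl.1 rfl)
            (by rintro ⟨rfl, rfl⟩; exact hl.2 rfl), zero_mul]
      · intro m _ hm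
        rw [hoff m l hm (by rintro ⟨rfl, rfl⟩; exact hl.2 rfl)
          (by rintro ⟨rfl, rfl⟩; exact hl.1 rfl), mul_zero]
      · simp
  · push_neg at hk
    rw [Finset.sum_eq_single k]
    · rw [hdiag k hk.1 hk.2, one_mul]
      by_cases hkl : k = l
      · subst hkl; rw [hdiag k hk.1 hk.2, Matrix.one_apply_eq]
      · rw [hoff k l hkl (by rintro ⟨rfl, rfl⟩; exact hk.1 rfl)
          (by rintro ⟨rfl, rfl⟩; exact hk.2 rfl), Matrix.one_apply_ne hkl]
    · intro m _ hm
      rw [hoff m k hm (by rintro ⟨rfl, rfl⟩; exact hk.2 rfl)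
        (by rintro ⟨rfl, rfl⟩; exact hk.1 rfl), zero_mul]
    · simp

lemma extGivens_trace {i j : Fin d} {G Z : Matrix (Fin d) (Fin d) ℝ} (hij : i ≠ j)
    (hG : IsExtGivens i j G) :
    (Gᵀ * Z).trace = Z.trace - (sub2 Z i j).trace + ((sub2 G i j)ᵀ * sub2 Z i j).trace := by
  obtain ⟨hblk, hdiag, hoff⟩ := hG
  have htr : (Gᵀ * Z).trace = ∑ k, ∑ m, G m k * Z m k := by
    simp [Matrix.trace, Matrix.diag, Matrix.mul_apply]
  have hcol : ∀ k l : Fin d, (l = i ∨ l = j) →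
      ∑ m, G m l * Z m l = G i l * Z i l + G j l * Z j l := by
    intro k l hl
    rw [← Finset.sum_subset (Finset.subset_univ ({i, j} : Finset (Fin d)))
      (fun m _ hm => ?_), Finset.sum_pair hij]
    have hmi : m ≠ i := fun h => hm (by simp [h])
    have hmj : m ≠ j := fun h => hm (by simp [h])
    have hml : m ≠ l := by rcases hl with rfl | rfl <;> assumption
    rw [hoff m l hml (by rintro ⟨rfl, rfl⟩; exact hmi rfl)
      (by rintro ⟨rfl, rfl⟩; exact hmj rfl), zero_mul]
  have h1 : ∀ k : Fin d, k ≠ i → k ≠ j → ∑ m, G m k * Z m k = Z k k := by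
    intro k hki hkj
    rw [Finset.sum_eq_single k]
    · rw [hdiag k hki hkj, one_mul]
    · intro m _ hm
      rw [hoff m k hm (by rintro ⟨rfl, rfl⟩; exact hkj rfl)
        (by rintro ⟨rfl, rfl⟩; exact hki rfl), zero_mul]
    · simp
  have hsplit : ∑ k, ((∑ m, G m k * Z m k) - Z k k) =
      (G i i * Z i i + G j i * Z j i - Z i i) + (G i j * Z i j + G j j * Z j j - Z j j) := by
    rw [← Finset.sum_subset (Finset.subset_univ ({i, j} : Finset (Fin d)))
      (fun k _ hk => ?_), Finset.sum_pair hij, hcol i i (Or.inl rfl), hcol i j (Or.inr rfl)]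
    have hki : k ≠ i := fun h => hk (by simp [h])
    have hkj : k ≠ j := fun h => hk (by simp [h])
    rw [h1 k hki hkj, sub_self]
  have hZtr : Z.trace = ∑ k, Z k k := by simp [Matrix.trace, Matrix.diag]
  rw [htr, sub2_trace, sub2_block_trace]
  have := Finset.sum_sub_distrib (s := (Finset.univ : Finset (Fin d)))
    (f := fun k => ∑ m, G m k * Z m k) (g := fun k => Z k k)
  rw [this] at hsplit
  rw [← hZtr] at hsplit
  linarith [hsplit]

lemma frobSq_sub (L M : Matrix (Fin d) (Fin p) ℝ) :
    frobSq (L - M) = frobSq L + frobSq M - 2 * ∑ a, ∑ b, L a b * M a b := by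
  have h : ∀ a b, (L a b - M a b) ^ 2
      = L a b ^ 2 + M a b ^ 2 - 2 * (L a b * M a b) := fun a b => by ring
  simp only [frobSq, Matrix.sub_apply, h, Finset.sum_sub_distrib, Finset.sum_add_distrib,
    Finset.mul_sum]

lemma frob_trace (M : Matrix (Fin d) (Fin p) ℝ) : frobSq M = (Mᵀ * M).trace := by
  simp only [frobSq, Matrix.trace, Matrix.diag, Matrix.mul_apply, Matrix.transpose_apply, sq]
  exact Finset.sum_comm

lemma cross_trace (L N : Matrix (Fin d) (Fin p) ℝ) (G : Matrix (Fin d) (Fin d) ℝ) :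
    ∑ a, ∑ b, L a b * (G * N) a b = (Gᵀ * (L * Nᵀ)).trace := by
  have h1 : ∑ a, ∑ b, L a b * (G * N) a b = (Lᵀ * (G * N)).trace := by
    simp only [Matrix.trace, Matrix.diag, Matrix.mul_apply, Matrix.transpose_apply]
    exact Finset.sum_comm
  rw [h1, ← Matrix.mul_assoc, Matrix.trace_mul_comm, ← Matrix.trace_transpose,
    Matrix.transpose_mul, Matrix.transpose_mul, Matrix.transpose_transpose,
    Matrix.mul_assoc]

lemma frob_expand {i j : Fin d} (hij : i ≠ j) (L N : Matrix (Fin d) (Fin p) ℝ)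
    {G : Matrix (Fin d) (Fin d) ℝ} (hG : IsExtGivens i j G) :
    frobSq (L - G * N) = frobSq L + frobSq N -
      2 * ((L * Nᵀ).trace - (sub2 (L * Nᵀ) i j).trace
        + ((sub2 G i j)ᵀ * sub2 (L * Nᵀ) i j).trace) := by
  rw [frobSq_sub, cross_trace, extGivens_trace hij hG]
  have hGN : frobSq (G * N) = frobSq N := by
    rw [frob_trace, frob_trace N, Matrix.transpose_mul, Matrix.mul_assoc,
      ← Matrix.mul_assoc Gᵀ G N, extGivens_orthogonal hij hG, Matrix.one_mul]
  rw [hGN]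

lemma block_trace_le {i j : Fin d} (Z : Matrix (Fin d) (Fin d) ℝ)
    {G : Matrix (Fin d) (Fin d) ℝ} (hG : IsExtGivens i j G) :
    ((sub2 G i j)ᵀ * sub2 Z i j).trace ≤ nuclearNorm (sub2 Z i j) := by
  obtain ⟨⟨c, s, hcs, hform⟩, -, -⟩ := hG
  rw [sub2_block_trace]
  have hA00 : (sub2 Z i j) 0 0 = Z i i := by simp [sub2]
  have hA01 : (sub2 Z i j) 0 1 = Z i j := by simp [sub2]
  have hA10 : (sub2 Z i j) 1 0 = Z j i := by simp [sub2]
  have hA11 : (sub2 Z i j) 1 1 = Z j j := by simp [sub2]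
  rcases hform with ⟨h1, h2, h3, h4⟩ | ⟨h1, h2, h3, h4⟩
  · have := rot_le (sub2 Z i j) c s hcs
    rw [hA00, hA01, hA10, hA11] at this
    rw [h1, h2, h3, h4]; linarith
  · have := refl_le (sub2 Z i j) c s hcs
    rw [hA00, hA01, hA10, hA11] at this
    rw [h1, h2, h3, h4]; linarith

/-- Explicit extended Givens matrix from a 2×2 block. -/
def mkG {d : ℕ} (i j : Fin d) (B : Matrix (Fin 2) (Fin 2) ℝ) : Matrix (Fin d) (Fin d) ℝ :=
  fun k l =>
    if k = i then (if l = i then B 0 0 else if l = j then B 0 1 else 0)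
    else if k = j then (if l = i then B 1 0 else if l = j then B 1 1 else 0)
    else if k = l then 1 else 0

lemma mkG_sub2 {i j : Fin d} (hij : i ≠ j) (B : Matrix (Fin 2) (Fin 2) ℝ) :
    sub2 (mkG i j B) i j = B := by
  ext a b
  fin_cases a <;> fin_cases b <;> simp [sub2, mkG, hij, hij.symm]

lemma mkG_extGivens {i j : Fin d} (hij : i ≠ j) (B : Matrix (Fin 2) (Fin 2) ℝ)
    (c s : ℝ) (hcs : c ^ 2 + s ^ 2 = 1)
    (hB : B = !![c, -s; s, c] ∨ B = !![c, s; s, -c]) :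
    IsExtGivens i j (mkG i j B) := by
  refine ⟨⟨c, s, hcs, ?_⟩, ?_, ?_⟩
  · rcases hB with rfl | rfl
    · left; refine ⟨?_, ?_, ?_, ?_⟩ <;> simp [mkG, hij, hij.symm]
    · right; refine ⟨?_, ?_, ?_, ?_⟩ <;> simp [mkG, hij, hij.symm]
  · intro k hki hkj; simp [mkG, hki, hkj]
  · intro k l hkl hs1 hs2
    by_cases hki : k = i
    · subst hki
      have hli : l ≠ k := fun h => hkl h.symm
      have hlj : l ≠ j := fun h => hs1 ⟨rfl, h⟩
      simp [mkG, hli, hlj, hli.symm, hlj.symm]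
    · by_cases hkj : k = j
      · subst hkj
        have hli : l ≠ i := fun h => hs2 ⟨rfl, h⟩
        have hlj : l ≠ k := fun h => hkl h.symm
        simp [mkG, hki, hli, hlj, hli.symm, hlj.symm]
      · simp [mkG, hki, hkj, hkl]

end Struct

/-- The squared off-diagonal "norm" `off(M)² = Σ_{t≠q} M_tq²`. -/
def offSq {d : ℕ} (M : Matrix (Fin d) (Fin d) ℝ) : ℝ :=
  ∑ t, ∑ q, if t ≠ q then (M t q) ^ 2 else 0
/-- Theorem 1: with `Z = L Nᵀ`, the minimum of `‖L − G N‖_F²` over all extended orthogonal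
Givens transformations `G` (over all pairs `i < j` and all 2×2 orthogonal blocks) equals
`‖L‖_F² + ‖N‖_F² − 2(tr Z + max_{i<j} C_ij(Z))`, and is attained at any transformation
acting on a pair maximizing `C_ij(Z)` whose block `G̃` satisfies
`tr(G̃ᵀ Z_{⟨i,j⟩}) = ‖Z_{⟨i,j⟩}‖_*`. -/
theorem stmt4 {d p : ℕ} (hd : 2 ≤ d) (L N : Matrix (Fin d) (Fin p) ℝ)
    (Z : Matrix (Fin d) (Fin d) ℝ) (hZ : Z = L * Nᵀ) :
    ∃ hne : (Finset.univ.filter (fun q : Fin d × Fin d => q.1 < q.2)).Nonempty,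
      IsLeast {x : ℝ | ∃ (i j : Fin d) (G : Matrix (Fin d) (Fin d) ℝ),
          i < j ∧ IsExtGivens i j G ∧ x = frobSq (L - G * N)}
        (frobSq L + frobSq N - 2 * (Z.trace +
          (Finset.univ.filter (fun q : Fin d × Fin d => q.1 < q.2)).sup' hne
            (fun q => score Z q.1 q.2))) ∧
      ∀ (i j : Fin d) (G : Matrix (Fin d) (Fin d) ℝ), i < j →
        (∀ i' j' : Fin d, i' < j' → score Z i' j' ≤ score Z i j) →
        IsExtGivens i j G →
        ((sub2 G i j)ᵀ * sub2 Z i j).trace = nuclearNorm (sub2 Z i j) →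
        frobSq (L - G * N) =
          frobSq L + frobSq N - 2 * (Z.trace + score Z i j) := by
  subst hZ
  have h01 : ((⟨0, by omega⟩ : Fin d), (⟨1, by omega⟩ : Fin d)) ∈
      Finset.univ.filter (fun q : Fin d × Fin d => q.1 < q.2) := by
    refine Finset.mem_filter.mpr ⟨Finset.mem_univ _, ?_⟩
    exact Fin.mk_lt_mk.mpr (by norm_num)
  have hne : (Finset.univ.filter (fun q : Fin d × Fin d => q.1 < q.2)).Nonempty := ⟨_, h01⟩
  refine ⟨hne, ⟨⟨?_, ?_⟩, ?_⟩⟩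
  · -- membership : the claimed minimum is attained
    obtain ⟨q, hq, hqs⟩ := Finset.exists_mem_eq_sup' hne
      (fun q : Fin d × Fin d => score (L * Nᵀ) q.1 q.2)
    obtain ⟨B, ⟨c, s, hcs, hBform⟩, hBtr⟩ := exists_opt (sub2 (L * Nᵀ) q.1 q.2)
    have hij : q.1 < q.2 := (Finset.mem_filter.mp hq).2
    have hGE := mkG_extGivens hij.ne B c s hcs hBform
    refine ⟨q.1, q.2, mkG q.1 q.2 B, hij, hGE, ?_⟩
    rw [frob_expand hij.ne L N hGE, mkG_sub2 hij.ne, hBtr, hqs]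
    simp only [score]
    ring
  · -- lower bound
    rintro x ⟨i, j, G, hij, hG, rfl⟩
    rw [frob_expand hij.ne L N hG]
    have h1 := block_trace_le (L * Nᵀ) hG
    have h2 : score (L * Nᵀ) i j ≤
        (Finset.univ.filter (fun q : Fin d × Fin d => q.1 < q.2)).sup' hne
          (fun q => score (L * Nᵀ) q.1 q.2) :=
      Finset.le_sup' (f := fun q : Fin d × Fin d => score (L * Nᵀ) q.1 q.2)
        (Finset.mem_filter.mpr ⟨Finset.mem_univ (i, j), hij⟩)
    have h3 : score (L * Nᵀ) i j
        = nuclearNorm (sub2 (L * Nᵀ) i j) - (sub2 (L * Nᵀ) i j).trace := rfl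
    linarith
  · -- the characterization of optimal transformations
    intro i j G hij _hmax hG htr
    rw [frob_expand hij.ne L N hG, htr]
    simp only [score]
    ring
end

section
/- Let U be a real orthogonal d×d matrix, let i < j, and let G be an extended orthogonal Givens transformation on indices (i,j) whose 2×2 block G̃ satisfies tr(G̃ᵀ U_{⟨i,j⟩}) = ‖U_{⟨i,j⟩}‖_*. Then tr(U Gᵀ) = tr(U) + C_ij(U), and tr(U Gᵀ) ≤ d. -/
open Matrix

/-- If `U` is real orthogonal and `G` is an extended orthogonal Givens transformation on
`(i,j)` whose block `G̃` satisfies `tr(G̃ᵀ U_{⟨i,j⟩}) = ‖U_{⟨i,j⟩}‖_*`, then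
`tr(U Gᵀ) = tr(U) + C_ij(U)` and `tr(U Gᵀ) ≤ d`. -/
theorem stmt5 {d : ℕ} (U G : Matrix (Fin d) (Fin d) ℝ) (hU : Uᵀ * U = 1)
    (i j : Fin d) (hij : i < j) (hG : IsExtGivens i j G)
    (hopt : ((sub2 G i j)ᵀ * sub2 U i j).trace = nuclearNorm (sub2 U i j)) :
    (U * Gᵀ).trace = U.trace + score U i j ∧ (U * Gᵀ).trace ≤ (d : ℝ) := by
  obtain ⟨⟨c, s, hcs, hblock⟩, hdiag, hoff⟩ := hG
  have hne : i ≠ j := ne_of_lt hij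
  -- off-block entries of G vanish
  have hGrow0 : ∀ k, k ≠ i → k ≠ j → ∀ l, l ≠ k → G k l = 0 := by
    intro k hki hkj l hlk
    exact hoff k l hlk.symm (fun h => hki h.1) (fun h => hkj h.1)
  have hGi0 : ∀ l, l ≠ i → l ≠ j → G i l = 0 := by
    intro l hli hlj
    exact hoff i l hli.symm (fun h => hlj h.2) (fun h => hne h.1)
  have hGj0 : ∀ l, l ≠ i → l ≠ j → G j l = 0 := by
    intro l hli hlj
    exact hoff j l hlj.symm (fun h => hne.symm h.1) (fun h => hli h.2)
  -- trace as a double sum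
  have htr : (U * Gᵀ).trace = ∑ k, ∑ l, U k l * G k l := by
    simp [Matrix.trace, Matrix.mul_apply, Matrix.transpose_apply, Matrix.diag]
  -- row sums
  have hSk : ∀ k, k ≠ i → k ≠ j → ∑ l, U k l * G k l = U k k := by
    intro k hki hkj
    rw [Finset.sum_eq_single k]
    · rw [hdiag k hki hkj, mul_one]
    · intro l _ hl; rw [hGrow0 k hki hkj l hl, mul_zero]
    · simp
  have hSi : ∑ l, U i l * G i l = U i i * G i i + U i j * G i j := by
    rw [← Finset.sum_subset (Finset.subset_univ ({i, j} : Finset (Fin d)))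
        (fun x _ hx => ?_), Finset.sum_pair hne]
    have hxi : x ≠ i := fun h => hx (by simp [h])
    have hxj : x ≠ j := fun h => hx (by simp [h])
    rw [hGi0 x hxi hxj, mul_zero]
  have hSj : ∑ l, U j l * G j l = U j i * G j i + U j j * G j j := by
    rw [← Finset.sum_subset (Finset.subset_univ ({i, j} : Finset (Fin d)))
        (fun x _ hx => ?_), Finset.sum_pair hne]
    have hxi : x ≠ i := fun h => hx (by simp [h])
    have hxj : x ≠ j := fun h => hx (by simp [h])
    rw [hGj0 x hxi hxj, mul_zero]
  have hdiff : ∑ k, ((∑ l, U k l * G k l) - U k k)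
      = ∑ k ∈ ({i, j} : Finset (Fin d)), ((∑ l, U k l * G k l) - U k k) := by
    refine (Finset.sum_subset (Finset.subset_univ _) (fun x _ hx => ?_)).symm
    have hxi : x ≠ i := fun h => hx (by simp [h])
    have hxj : x ≠ j := fun h => hx (by simp [h])
    rw [hSk x hxi hxj, sub_self]
  rw [Finset.sum_pair hne, Finset.sum_sub_distrib, hSi, hSj] at hdiff
  -- block traces
  have hblk : ((sub2 G i j)ᵀ * sub2 U i j).trace
      = G i i * U i i + G j i * U j i + G i j * U i j + G j j * U j j := by
    simp [sub2, Matrix.trace, Matrix.mul_apply, Matrix.transpose_apply, Fin.sum_univ_two,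
      Matrix.diag, Matrix.vecHead, Matrix.vecTail]
    ring
  have hblkU : (sub2 U i j).trace = U i i + U j j := by
    simp [sub2, Matrix.trace, Fin.sum_univ_two, Matrix.diag]
  have hUtr : U.trace = ∑ k, U k k := rfl
  have h1 : (U * Gᵀ).trace = U.trace + score U i j := by
    rw [htr, hUtr, score, hblkU, ← hopt, hblk]
    linear_combination hdiff
  refine ⟨h1, ?_⟩
  -- orthogonality facts
  have hUUT : U * Uᵀ = 1 := mul_eq_one_comm.mp hU
  have hUrow : ∀ k, ∑ l, (U k l) ^ 2 = 1 := by
    intro k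
    have := congrFun (congrFun hUUT k) k
    simpa [Matrix.mul_apply, Matrix.one_apply, sq] using this
  have hGrowsq : ∀ k, ∑ l, (G k l) ^ 2 = 1 := by
    intro k
    by_cases hki : k = i
    · subst hki
      have : ∑ l, (G k l) ^ 2 = ∑ l ∈ ({k, j} : Finset (Fin d)), (G k l) ^ 2 := by
        refine (Finset.sum_subset (Finset.subset_univ _) (fun x _ hx => ?_)).symm
        have hxi : x ≠ k := fun h => hx (by simp [h])
        have hxj : x ≠ j := fun h => hx (by simp [h])
        rw [hGi0 x hxi hxj]; ring
      rw [this, Finset.sum_pair hne]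
      rcases hblock with ⟨h1, h2, _, _⟩ | ⟨h1, h2, _, _⟩ <;> rw [h1, h2] <;> linear_combination hcs
    · by_cases hkj : k = j
      · subst hkj
        have : ∑ l, (G k l) ^ 2 = ∑ l ∈ ({i, k} : Finset (Fin d)), (G k l) ^ 2 := by
          refine (Finset.sum_subset (Finset.subset_univ _) (fun x _ hx => ?_)).symm
          have hxi : x ≠ i := fun h => hx (by simp [h])
          have hxj : x ≠ k := fun h => hx (by simp [h])
          rw [hGj0 x hxi hxj]; ring
        rw [this, Finset.sum_pair hne]
        rcases hblock with ⟨_, _, h3, h4⟩ | ⟨_, _, h3, h4⟩ <;> rw [h3, h4] <;> linear_combination hcs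
      · rw [Finset.sum_eq_single k]
        · rw [hdiag k hki hkj]; norm_num
        · intro l _ hl; rw [hGrow0 k hki hkj l hl]; ring
        · simp
  have hdg : ∀ k, ∑ l, U k l * G k l ≤ 1 := by
    intro k
    have h2 : (∑ l, U k l * G k l) ^ 2 ≤ 1 := by
      have := Finset.sum_mul_sq_le_sq_mul_sq Finset.univ (fun l => U k l) (fun l => G k l)
      rw [hUrow k, hGrowsq k] at this
      simpa using this
    nlinarith
  calc (U * Gᵀ).trace = ∑ k, ∑ l, U k l * G k l := htr
    _ ≤ ∑ _k : Fin d, (1 : ℝ) := Finset.sum_le_sum (fun k _ => hdg k)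
    _ = (d : ℝ) := by simp
end

section
/- Let U be a real orthogonal d×d matrix and let r be an integer with 1 ≤ r ≤ d. Then there exists a matrix Ū which is a product of g = r(2d − r − 1)/2 Givens rotations and one diagonal matrix with diagonal entries in {+1, −1}, such that ‖U − Ū‖_F² ≤ 2(d − r). -/
open Matrix

def rot {d : ℕ} (i j : Fin d) (c s : ℝ) : Matrix (Fin d) (Fin d) ℝ :=
  fun k l => if k = i ∧ l = i then c else if k = i ∧ l = j then -s
    else if k = j ∧ l = i then s else if k = j ∧ l = j then c
    else if k = l then 1 else 0

variable {d : ℕ}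

lemma rot_givens (i j : Fin d) (hij : i ≠ j) {c s : ℝ} (h : c^2+s^2=1) :
    IsGivensRotation i j (rot i j c s) := by
  refine ⟨⟨c, s, h, ?_, ?_, ?_, ?_⟩, ?_, ?_⟩
  · simp [rot]
  · simp [rot, hij, hij.symm]
  · simp [rot, hij, hij.symm]
  · simp [rot, hij, hij.symm]
  · intro k hki hkj; simp [rot, hki, hkj]
  · intro k l hkl h1 h2
    simp only [rot]
    split_ifs with a1 a2 a3 a4 a5 <;>
      first
      | rfl
      | (exact absurd (a1.1.trans a1.2.symm) hkl)
      | (exact absurd a2 h1)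
      | (exact absurd a3 h2)
      | (exact absurd (a2.1.trans a2.2.symm) hkl)
      | (exact absurd (a4.1.trans a4.2.symm) hkl)
      | (exact absurd a5 hkl)

lemma rot_row_i (i j : Fin d) (hij : i ≠ j) (c s : ℝ) (m : Fin d) :
    rot i j c s i m = if m = i then c else if m = j then -s else 0 := by
  simp only [rot]; split_ifs <;> tauto
lemma rot_row_j (i j : Fin d) (hij : i ≠ j) (c s : ℝ) (m : Fin d) :
    rot i j c s j m = if m = i then s else if m = j then c else 0 := by
  simp only [rot]; split_ifs <;> tauto
lemma rot_row_other (i j : Fin d) (c s : ℝ) (t m : Fin d) (hti : t ≠ i) (htj : t ≠ j) :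
    rot i j c s t m = if m = t then 1 else 0 := by
  simp only [rot]; split_ifs <;> tauto

lemma rot_mul (i j : Fin d) (hij : i ≠ j) (c s : ℝ) (V : Matrix (Fin d) (Fin d) ℝ) (t q : Fin d) :
    (rot i j c s * V) t q =
      if t = i then c * V i q - s * V j q
      else if t = j then s * V i q + c * V j q
      else V t q := by
  rw [mul_apply]
  by_cases hti : t = i
  · rw [if_pos hti]
    have key : ∀ m : Fin d, rot i j c s t m * V m q =
        (if m = i then c * V i q else 0) + (if m = j then -s * V j q else 0) := by
      intro m
      rw [hti, rot_row_i i j hij]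
      split_ifs with h1 h2 h3
      · exact absurd (h1.symm.trans h2) hij
      · rw [h1]; ring
      · rw [h3]; ring
      · ring
    simp only [key, Finset.sum_add_distrib, Finset.sum_ite_eq', Finset.mem_univ, if_pos]
    ring
  · by_cases htj : t = j
    · rw [if_neg hti, if_pos htj]
      have key : ∀ m : Fin d, rot i j c s t m * V m q =
          (if m = i then s * V i q else 0) + (if m = j then c * V j q else 0) := by
        intro m
        rw [htj, rot_row_j i j hij]
        split_ifs with h1 h2 h3
        · exact absurd (h1.symm.trans h2) hij
        · rw [h1]; ring
        · rw [h3]; ring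
        · ring
      simp only [key, Finset.sum_add_distrib, Finset.sum_ite_eq', Finset.mem_univ, if_pos]
    · rw [if_neg hti, if_neg htj]
      have key : ∀ m : Fin d, rot i j c s t m * V m q = if m = t then V t q else 0 := by
        intro m
        rw [rot_row_other i j c s t m hti htj]
        split_ifs with h1
        · rw [h1]; ring
        · ring
      simp only [key, Finset.sum_ite_eq', Finset.mem_univ, if_pos]

lemma rot_mul_rot_neg (i j : Fin d) (hij : i ≠ j) {c s : ℝ} (h : c^2+s^2=1) :
    rot i j c s * rot i j c (-s) = 1 := by
  ext t q
  rw [rot_mul i j hij, one_apply]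
  by_cases hti : t = i
  · rw [if_pos hti, rot_row_i i j hij, rot_row_j i j hij]
    split_ifs <;> first | (subst_vars; nlinarith [h]) | (subst_vars; tauto)
  · by_cases htj : t = j
    · rw [if_neg hti, if_pos htj, rot_row_i i j hij, rot_row_j i j hij]
      split_ifs <;> first | (subst_vars; nlinarith [h]) | (subst_vars; tauto)
    · rw [if_neg hti, if_neg htj, rot_row_other i j c (-s) t q hti htj]
      split_ifs <;> tauto

set_option maxHeartbeats 2000000 in
lemma rot_transpose (i j : Fin d) (c s : ℝ) : (rot i j c s)ᵀ = rot i j c (-s) := by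
  ext k l
  simp only [transpose_apply, rot]
  split_ifs <;> first | ring1 | tauto | (subst_vars; tauto)

lemma exists_rot_zero (i j : Fin d) (hij : i ≠ j) (V : Matrix (Fin d) (Fin d) ℝ) :
    ∃ c s : ℝ, c^2+s^2=1 ∧ (rot i j c (-s) * V) j i = 0 := by
  have hji : j ≠ i := hij.symm
  by_cases hn : Real.sqrt ((V i i)^2 + (V j i)^2) = 0
  · refine ⟨1, 0, by ring, ?_⟩
    have h0 : (V i i)^2 + (V j i)^2 = 0 := by
      have h := Real.sqrt_eq_zero'.mp hn
      nlinarith [sq_nonneg (V i i), sq_nonneg (V j i)]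
    have hb : V j i = 0 := by nlinarith [sq_nonneg (V i i), sq_nonneg (V j i)]
    rw [rot_mul i j hij, if_neg hji, if_pos rfl, hb]; ring
  · have hpos : 0 < Real.sqrt ((V i i)^2 + (V j i)^2) :=
      lt_of_le_of_ne (Real.sqrt_nonneg _) (Ne.symm hn)
    set nn := Real.sqrt ((V i i)^2 + (V j i)^2) with hnn
    have hsq : nn^2 = (V i i)^2 + (V j i)^2 := by
      rw [hnn]; exact Real.sq_sqrt (by positivity)
    refine ⟨V i i / nn, V j i / nn, ?_, ?_⟩
    · field_simp
      linarith [hsq]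
    · rw [rot_mul i j hij, if_neg hji, if_pos rfl]
      field_simp
      ring

lemma clearCol (c : Fin d) : ∀ (n : ℕ) (V : Matrix (Fin d) (Fin d) ℝ),
    (∀ t q : Fin d, (q:ℕ) < (c:ℕ) → (q:ℕ) < (t:ℕ) → V t q = 0) →
    ∃ (L : List (Matrix (Fin d) (Fin d) ℝ)) (W : Matrix (Fin d) (Fin d) ℝ),
      (∀ G ∈ L, ∃ i j : Fin d, i < j ∧ IsGivensRotation i j G) ∧
      L.length ≤ n ∧ V = L.prod * W ∧ Wᵀ * W = Vᵀ * V ∧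
      (∀ t q : Fin d, (q:ℕ) < (c:ℕ) → (q:ℕ) < (t:ℕ) → W t q = 0) ∧
      (∀ j : Fin d, (c:ℕ) < (j:ℕ) → (V j c = 0 ∨ d ≤ (j:ℕ) + n) → W j c = 0)
  | 0, V, hlow => ⟨[], V, by simp, le_refl _, by simp, rfl, hlow, fun j hj hc => by
      rcases hc with h|h
      · exact h
      · exact absurd j.isLt (by omega)⟩
  | (n+1), V, hlow => by
    by_cases hcase : d ≤ (c:ℕ) + n + 1
    · obtain ⟨L, W, h1, h2, h3, h4, h5, h6⟩ := clearCol c n V hlow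
      refine ⟨L, W, h1, h2.trans (Nat.le_succ n), h3, h4, h5, fun j hj hd => ?_⟩
      refine h6 j hj ?_
      rcases hd with h|h
      · exact Or.inl h
      · exact Or.inr (by omega)
    · push_neg at hcase
      have hj0lt : d - n - 1 < d := by omega
      set j0 : Fin d := ⟨d - n - 1, hj0lt⟩ with hj0
      have hcj : c ≠ j0 := by
        intro h
        have : (c:ℕ) = d - n - 1 := by rw [h]
        omega
      have hcjv : (c:ℕ) < (j0:ℕ) := by
        have : (j0:ℕ) = d - n - 1 := rfl
        omega
      obtain ⟨co, so, hcs, hzero⟩ := exists_rot_zero c j0 hcj V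
      set V' := rot c j0 co (-so) * V with hV'
      have hGV : V = rot c j0 co so * V' := by
        rw [hV', ← Matrix.mul_assoc, rot_mul_rot_neg c j0 hcj hcs, Matrix.one_mul]
      have hrowV' : ∀ t q : Fin d, t ≠ c → t ≠ j0 → V' t q = V t q := by
        intro t q htc htj
        rw [hV', rot_mul c j0 hcj, if_neg htc, if_neg htj]
      have hlow' : ∀ t q : Fin d, (q:ℕ) < (c:ℕ) → (q:ℕ) < (t:ℕ) → V' t q = 0 := by
        intro t q hq hqt
        by_cases h1 : t = c
        · rw [hV', rot_mul c j0 hcj, if_pos h1,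
            hlow c q hq hq, hlow j0 q hq (by omega)]; ring
        · by_cases h2 : t = j0
          · rw [hV', rot_mul c j0 hcj, if_neg h1, if_pos h2,
              hlow c q hq hq, hlow j0 q hq (by omega)]; ring
          · rw [hrowV' t q h1 h2]; exact hlow t q hq hqt
      obtain ⟨L, W, h1, h2, h3, h4, h5, h6⟩ := clearCol c n V' hlow'
      refine ⟨rot c j0 co so :: L, W, ?_, by simpa using h2, ?_, ?_, h5, ?_⟩
      · intro X hX
        rcases List.mem_cons.mp hX with h|h
        · exact ⟨c, j0, hcjv, h ▸ rot_givens c j0 hcj hcs⟩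
        · exact h1 X h
      · rw [List.prod_cons, Matrix.mul_assoc, ← h3, hGV]
      · rw [h4, hV', Matrix.transpose_mul, rot_transpose, neg_neg, ← Matrix.mul_assoc,
          Matrix.mul_assoc Vᵀ, rot_mul_rot_neg c j0 hcj hcs, Matrix.mul_one]
      · intro j hj hd
        by_cases hjj : j = j0
        · exact h6 j hj (Or.inl (by rw [hjj]; exact hzero))
        · have hjv : (j:ℕ) ≠ d - n - 1 := fun h => hjj (Fin.ext h)
          refine h6 j hj ?_
          rcases hd with h|h
          · exact Or.inl (by rw [hrowV' j c (by intro hc; exact (Nat.lt_irrefl _ (hc ▸ hj))) hjj]; exact h)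
          · exact Or.inr (by omega)

/-- sum of (d-1-c) for c < r -/
def gsum (d : ℕ) : ℕ → ℕ
  | 0 => 0
  | (r+1) => gsum d r + (d - 1 - r)

lemma triangularize : ∀ (r : ℕ), r ≤ d → ∀ (U : Matrix (Fin d) (Fin d) ℝ),
    ∃ (L : List (Matrix (Fin d) (Fin d) ℝ)) (W : Matrix (Fin d) (Fin d) ℝ),
      (∀ G ∈ L, ∃ i j : Fin d, i < j ∧ IsGivensRotation i j G) ∧
      L.length ≤ gsum d r ∧ U = L.prod * W ∧ Wᵀ * W = Uᵀ * U ∧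
      (∀ t q : Fin d, (q:ℕ) < r → (q:ℕ) < (t:ℕ) → W t q = 0)
  | 0, _, U => ⟨[], U, by simp, le_refl _, by simp, rfl, fun t q hq _ => absurd hq (by omega)⟩
  | (r+1), hr, U => by
    obtain ⟨L, W, h1, h2, h3, h4, h5⟩ := triangularize r (by omega) U
    set c : Fin d := ⟨r, by omega⟩ with hc
    obtain ⟨L', W', g1, g2, g3, g4, g5, g6⟩ :=
      clearCol c (d - 1 - r) W (fun t q hq hqt => h5 t q hq hqt)
    refine ⟨L ++ L', W', ?_, ?_, ?_, ?_, ?_⟩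
    · intro G hG
      rcases List.mem_append.mp hG with h|h
      · exact h1 G h
      · exact g1 G h
    · rw [List.length_append]
      calc L.length + L'.length ≤ gsum d r + (d - 1 - r) := Nat.add_le_add h2 g2
        _ = gsum d (r+1) := rfl
    · rw [List.prod_append, Matrix.mul_assoc, ← g3, h3]
    · rw [g4, h4]
    · intro t q hq hqt
      by_cases hqr : (q:ℕ) < r
      · exact g5 t q hqr hqt
      · have hq' : (q:ℕ) = r := by omega
        have hcv : (c:ℕ) = r := rfl
        have hqc : q = c := Fin.ext (by omega)
        rw [hqc]
        exact g6 t (by omega) (Or.inr (by omega))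

lemma gsum_eq : ∀ r : ℕ, r ≤ d → gsum d r = r * (2 * d - r - 1) / 2
  | 0, _ => by simp [gsum]
  | (r+1), h => by
    have IH := gsum_eq r (by omega)
    have hA : (r * (2*d - r - 1)) % 2 = 0 := by
      have h1 := Nat.mul_mod r (2*d - r - 1) 2
      rcases Nat.mod_two_eq_zero_or_one r with h2|h2
      · simp [h1, h2]
      · have h3 : (2*d - r - 1) % 2 = 0 := by omega
        simp [h1, h2, h3]
    have hB : ((r+1) * (2*d - (r+1) - 1)) % 2 = 0 := by
      have h1 := Nat.mul_mod (r+1) (2*d - (r+1) - 1) 2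
      rcases Nat.mod_two_eq_zero_or_one (r+1) with h2|h2
      · simp [h1, h2]
      · have h3 : (2*d - (r+1) - 1) % 2 = 0 := by omega
        simp [h1, h2, h3]
    have e1 : r * (2*d - r - 1) = r * (2*d - r - 2) + r := by
      have hk : 2*d - r - 1 = (2*d - r - 2) + 1 := by omega
      rw [hk, Nat.mul_succ]
    have e2 : (r+1) * (2*d - (r+1) - 1) = r * (2*d - r - 2) + (2*d - r - 2) := by
      have hk : 2*d - (r+1) - 1 = 2*d - r - 2 := by omega
      rw [hk, Nat.succ_mul]
    show gsum d r + (d - 1 - r) = (r+1) * (2*d - (r+1) - 1) / 2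
    rw [IH]
    omega

lemma isGivens_one (i j : Fin d) (hij : i ≠ j) : IsGivensRotation i j (1 : Matrix (Fin d) (Fin d) ℝ) := by
  refine ⟨⟨1, 0, by ring, ?_, ?_, ?_, ?_⟩, ?_, ?_⟩
  · simp
  · simp [one_apply, hij]
  · simp [one_apply, hij.symm]
  · simp
  · intro k _ _; simp
  · intro k l hkl _ _; simp [one_apply, hkl]

lemma cols_pm (W : Matrix (Fin d) (Fin d) ℝ) (hW : Wᵀ * W = 1) (r : ℕ)
    (hlow : ∀ t q : Fin d, (q:ℕ) < r → (q:ℕ) < (t:ℕ) → W t q = 0) :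
    ∀ (m : ℕ) (q : Fin d), (q:ℕ) = m → (q:ℕ) < r →
      (∀ t, t ≠ q → W t q = 0) ∧ (W q q = 1 ∨ W q q = -1) := by
  have hent : ∀ i j : Fin d, (Wᵀ * W) i j = (1 : Matrix (Fin d) (Fin d) ℝ) i j :=
    fun i j => by rw [hW]
  intro m
  induction m using Nat.strong_induction_on with
  | _ m ih =>
    intro q hm hqr
    have hcol : ∀ t, t ≠ q → W t q = 0 := by
      intro t ht
      rcases lt_or_gt_of_ne (fun h : (t:ℕ) = (q:ℕ) => ht (Fin.ext h)) with hlt|hgt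
      · -- t < q : use orthogonality with column t
        have htr : (t:ℕ) < r := by omega
        obtain ⟨ht0, ht1⟩ := ih (t:ℕ) (by omega) t rfl htr
        have horth : ∑ k, W k t * W k q = 0 := by
          have := hent t q
          rw [mul_apply] at this
          simpa [transpose_apply, one_apply, ht] using this
        have hsum : ∑ k, W k t * W k q = W t t * W t q := by
          refine Finset.sum_eq_single t (fun b _ hb => ?_) (fun h => absurd (Finset.mem_univ t) h)
          rw [ht0 b hb]; ring
        have : W t t * W t q = 0 := by rw [← hsum]; exact horth
        rcases ht1 with h|h <;> rw [h] at this <;> linarith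
      · exact hlow t q hqr hgt
    refine ⟨hcol, ?_⟩
    have hdiag : ∑ k, W k q * W k q = 1 := by
      have := hent q q
      rw [mul_apply] at this
      simpa [transpose_apply, one_apply] using this
    have hsum : ∑ k, W k q * W k q = W q q * W q q := by
      refine Finset.sum_eq_single q (fun b _ hb => ?_) (fun h => absurd (Finset.mem_univ q) h)
      rw [hcol b hb]; ring
    have h1 : W q q * W q q = 1 := by rw [← hsum]; exact hdiag
    have h2 : (W q q - 1) * (W q q + 1) = 0 := by nlinarith
    rcases mul_eq_zero.mp h2 with h|h
    · left; linarith
    · right; linarith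

lemma frobSq_eq_trace (A : Matrix (Fin d) (Fin d) ℝ) : frobSq A = (Aᵀ * A).trace := by
  simp only [frobSq, Matrix.trace, Matrix.diag, mul_apply, transpose_apply, sq]
  exact Finset.sum_comm

lemma frobSq_mul_orth (P A : Matrix (Fin d) (Fin d) ℝ) (hP : Pᵀ * P = 1) :
    frobSq (P * A) = frobSq A := by
  rw [frobSq_eq_trace, frobSq_eq_trace, Matrix.transpose_mul, Matrix.mul_assoc,
    ← Matrix.mul_assoc Pᵀ, hP, Matrix.one_mul]

lemma sum_range_ite (r : ℕ) : ∀ m : ℕ, r ≤ m →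
    ∑ n ∈ Finset.range m, (if n < r then (0:ℝ) else 2) = 2*((m:ℝ) - r)
  | 0, h => by
    have : r = 0 := by omega
    simp [this]
  | (m+1), h => by
    rw [Finset.sum_range_succ]
    by_cases hm : r ≤ m
    · rw [sum_range_ite r m hm, if_neg (by omega)]
      push_cast; ring
    · have hr : r = m + 1 := by omega
      have hz : ∑ n ∈ Finset.range (m+1), (if n < r then (0:ℝ) else 2) = 0 :=
        Finset.sum_eq_zero (fun n hn => by
          rw [if_pos (by simp at hn; omega)])
      rw [Finset.sum_range_succ] at hz
      rw [hz, hr]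
      push_cast; ring

lemma final_bound (W : Matrix (Fin d) (Fin d) ℝ) (hWWT : W * Wᵀ = 1) (r : ℕ) (hrd : r ≤ d)
    (hcols : ∀ q : Fin d, (q:ℕ) < r → (∀ t, t ≠ q → W t q = 0) ∧ (W q q = 1 ∨ W q q = -1)) :
    ∃ D : Matrix (Fin d) (Fin d) ℝ, (∀ t, D t t = 1 ∨ D t t = -1) ∧ (∀ t q, t ≠ q → D t q = 0) ∧
      frobSq (W - D) ≤ 2 * ((d:ℝ) - r) := by
  set D : Matrix (Fin d) (Fin d) ℝ :=
    Matrix.of (fun t q => if t = q then (if 0 ≤ W t t then (1:ℝ) else -1) else 0) with hD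
  have hDdiag : ∀ t, D t t = 1 ∨ D t t = -1 := by
    intro t
    by_cases h : 0 ≤ W t t
    · left; simp [hD, h]
    · right; simp [hD, h]
  have hDoff : ∀ t q, t ≠ q → D t q = 0 := fun t q h => by simp [hD, h]
  have hrow1 : ∀ t, ∑ q, W t q * W t q = 1 := by
    intro t
    have h : (W * Wᵀ) t t = (1 : Matrix (Fin d) (Fin d) ℝ) t t := by rw [hWWT]
    rw [mul_apply] at h
    simpa [transpose_apply, one_apply] using h
  have hDsum : ∀ t, ∑ q, W t q * D t q = W t t * D t t := by
    intro t
    refine Finset.sum_eq_single t (fun b _ hb => ?_) (fun h => absurd (Finset.mem_univ t) h)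
    rw [hDoff t b (fun h => hb h.symm)]; ring
  have hDsq : ∀ t, ∑ q, D t q * D t q = 1 := by
    intro t
    have h : ∑ q, D t q * D t q = D t t * D t t := by
      refine Finset.sum_eq_single t (fun b _ hb => ?_) (fun h => absurd (Finset.mem_univ t) h)
      rw [hDoff t b (fun h => hb h.symm)]; ring
    rw [h]
    rcases hDdiag t with h'|h' <;> rw [h'] <;> norm_num
  have hrowbound : ∀ t : Fin d, ∑ q, ((W - D) t q)^2 ≤ (if (t:ℕ) < r then (0:ℝ) else 2) := by
    intro t
    have expand : ∑ q, ((W - D) t q)^2 =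
        (∑ q, W t q * W t q) - 2*(∑ q, W t q * D t q) + ∑ q, D t q * D t q := by
      have hpt : ∀ q, ((W - D) t q)^2 =
          W t q * W t q - 2*(W t q * D t q) + D t q * D t q := by
        intro q; simp only [Matrix.sub_apply]; ring
      rw [Finset.sum_congr rfl (fun q _ => hpt q), Finset.sum_add_distrib,
        Finset.sum_sub_distrib, ← Finset.mul_sum]
    rw [expand, hrow1 t, hDsum t, hDsq t]
    by_cases htr : (t:ℕ) < r
    · rw [if_pos htr]
      rcases (hcols t htr).2 with h|h
      · have h' : D t t = 1 := by simp [hD, h]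
        rw [h, h']; norm_num
      · have h' : D t t = -1 := by simp [hD, h]
        rw [h, h']; norm_num
    · rw [if_neg htr]
      have hnn : 0 ≤ W t t * D t t := by
        by_cases h : 0 ≤ W t t
        · have h' : D t t = 1 := by simp [hD, h]
          rw [h']; linarith
        · have h' : D t t = -1 := by simp [hD, h]
          push_neg at h
          rw [h']; nlinarith
      linarith
  refine ⟨D, hDdiag, hDoff, ?_⟩
  calc frobSq (W - D) = ∑ t, ∑ q, ((W - D) t q)^2 := rfl
    _ ≤ ∑ t : Fin d, (if (t:ℕ) < r then (0:ℝ) else 2) :=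
        Finset.sum_le_sum (fun t _ => hrowbound t)
    _ = ∑ n ∈ Finset.range d, (if n < r then (0:ℝ) else 2) :=
        Fin.sum_univ_eq_sum_range (fun n => if n < r then (0:ℝ) else 2) d
    _ = 2*((d:ℝ) - r) := sum_range_ite r d hrd


/-- For real orthogonal `U` and `1 ≤ r ≤ d` there is a matrix `Ū`, a product of
`g = r(2d − r − 1)/2` Givens rotations and one diagonal matrix with entries `±1`,
such that `‖U − Ū‖_F² ≤ 2(d − r)`. -/
theorem stmt11 {d : ℕ} (U : Matrix (Fin d) (Fin d) ℝ) (hU : Uᵀ * U = 1)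
    (r : ℕ) (hr1 : 1 ≤ r) (hrd : r ≤ d) :
    ∃ (J : Fin (r * (2 * d - r - 1) / 2) → Matrix (Fin d) (Fin d) ℝ)
      (D : Matrix (Fin d) (Fin d) ℝ),
      (∀ k, ∃ i j : Fin d, i < j ∧ IsGivensRotation i j (J k)) ∧
      (∀ t, D t t = 1 ∨ D t t = -1) ∧ (∀ t q, t ≠ q → D t q = 0) ∧
      frobSq (U - (List.ofFn J).prod * D) ≤ 2 * ((d : ℝ) - r) := by
  obtain ⟨L, W, hL, hlen, hUW, hWo, hlow⟩ := triangularize r hrd U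
  have hW1 : Wᵀ * W = 1 := by rw [hWo, hU]
  have hWWT : W * Wᵀ = 1 := mul_eq_one_comm.mp hW1
  have hcols := fun (q : Fin d) (hq : (q:ℕ) < r) => cols_pm W hW1 r hlow (q:ℕ) q rfl hq
  obtain ⟨D, hD1, hD2, hDb⟩ := final_bound W hWWT r hrd hcols
  set g := r * (2*d - r - 1) / 2 with hg
  have hlen' : L.length ≤ g := by rw [hg, ← gsum_eq r hrd]; exact hlen
  set J : Fin g → Matrix (Fin d) (Fin d) ℝ :=
    fun k => if h : (k:ℕ) < L.length then L.get ⟨k, h⟩ else 1 with hJ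
  have hofn : List.ofFn J = L ++ List.replicate (g - L.length) 1 := by
    apply List.ext_getElem
    · simp only [List.length_ofFn, List.length_append, List.length_replicate]
      omega
    · intro n h1 h2
      simp only [List.getElem_ofFn]
      by_cases hn : n < L.length
      · rw [List.getElem_append_left hn]
        simp [hJ, hn]
      · rw [List.getElem_append_right (le_of_not_gt hn)]
        simp [hJ, hn]
  have hprod : (List.ofFn J).prod = L.prod := by
    rw [hofn, List.prod_append, List.prod_replicate, one_pow, mul_one]
  have hPW : L.prod = U * Wᵀ := by rw [hUW, Matrix.mul_assoc, hWWT, Matrix.mul_one]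
  have hP : (L.prod)ᵀ * L.prod = 1 := by
    rw [hPW, Matrix.transpose_mul, Matrix.transpose_transpose, Matrix.mul_assoc,
      ← Matrix.mul_assoc Uᵀ, hU, Matrix.one_mul, hWWT]
  refine ⟨J, D, ?_, hD1, hD2, ?_⟩
  · intro k
    by_cases h : (k:ℕ) < L.length
    · have hJk : J k = L.get ⟨k, h⟩ := by simp [hJ, h]
      obtain ⟨i, j, hij, hG⟩ := hL (L.get ⟨k, h⟩) (List.get_mem L _)
      exact ⟨i, j, hij, hJk ▸ hG⟩
    · have hJk : J k = 1 := by simp [hJ, h]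
      have hg0 : 0 < g := Nat.pos_of_ne_zero (fun hz => by
        rw [hz] at k; exact absurd k.isLt (by omega))
      have hd2 : 2 ≤ d := by
        by_contra hd
        have hd1 : d = 1 := by omega
        have hr' : r = 1 := by omega
        rw [hg, hd1, hr'] at hg0
        norm_num at hg0
      exact ⟨⟨0, by omega⟩, ⟨1, by omega⟩, by simp [Fin.lt_def],
        hJk ▸ isGivens_one _ _ (by simp [Fin.ext_iff])⟩
  · rw [hprod]
    have heq : U - L.prod * D = L.prod * (W - D) := by
      rw [Matrix.mul_sub, ← hUW]
    rw [heq, frobSq_mul_orth _ _ hP]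
    exact hDb
end

section
/- Let U be a real orthogonal d×d matrix, let i < j, and let G be an extended orthogonal Givens transformation on (i,j) whose 2×2 block G̃ satisfies tr(G̃ᵀ U_{⟨i,j⟩}) = ‖U_{⟨i,j⟩}‖_*. Then off(U Gᵀ)² ≤ off(U)² + U_ii² + U_jj² − ½·‖U_{⟨i,j⟩}‖_*². -/
open Matrix


private lemma sum_two_aux {d : ℕ} (i j : Fin d) (hij : i ≠ j) (f : Fin d → ℝ)
    (h0 : ∀ k, k ≠ i → k ≠ j → f k = 0) : ∑ k, f k = f i + f j := by
  have h := Finset.sum_subset (Finset.subset_univ ({i, j} : Finset (Fin d)))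
    (fun x _ hx => by
      simp only [Finset.mem_insert, Finset.mem_singleton] at hx
      push_neg at hx
      exact h0 x hx.1 hx.2)
  rw [← h, Finset.sum_pair hij]

private lemma offSq_eq {d : ℕ} (Z : Matrix (Fin d) (Fin d) ℝ) :
    offSq Z = frobSq Z - ∑ t, Z t t ^ 2 := by
  unfold offSq frobSq
  rw [← Finset.sum_sub_distrib]
  refine Finset.sum_congr rfl fun t _ => ?_
  have : ∀ q, (if t ≠ q then Z t q ^ 2 else 0) = Z t q ^ 2 - (if t = q then Z t q ^ 2 else 0) := by
    intro q; by_cases h : t = q <;> simp [h]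
  rw [Finset.sum_congr rfl fun q _ => this q, Finset.sum_sub_distrib, Finset.sum_ite_eq]
  simp

/-- If `U` is real orthogonal and `G` is an extended orthogonal Givens transformation on
`(i,j)` whose block `G̃` satisfies `tr(G̃ᵀ U_{⟨i,j⟩}) = ‖U_{⟨i,j⟩}‖_*`, then
`off(U Gᵀ)² ≤ off(U)² + U_ii² + U_jj² − ½ ‖U_{⟨i,j⟩}‖_*²`. -/
theorem stmt12 {d : ℕ} (U G : Matrix (Fin d) (Fin d) ℝ) (hU : Uᵀ * U = 1)
    (i j : Fin d) (hij : i < j) (hG : IsExtGivens i j G)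
    (hopt : ((sub2 G i j)ᵀ * sub2 U i j).trace = nuclearNorm (sub2 U i j)) :
    offSq (U * Gᵀ) ≤
      offSq U + (U i i) ^ 2 + (U j j) ^ 2 - (1 / 2) * (nuclearNorm (sub2 U i j)) ^ 2 := by
  obtain ⟨⟨c, s, hcs, hblk⟩, hdiag, hoff⟩ := hG
  have hne : i ≠ j := ne_of_lt hij
  set N := nuclearNorm (sub2 U i j) with hN
  set M := U * Gᵀ with hM
  have hMent : ∀ t q, M t q = ∑ k, U t k * G q k := by
    intro t q
    simp [hM, Matrix.mul_apply, Matrix.transpose_apply]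
  -- off-block columns unchanged
  have hMq : ∀ t q, q ≠ i → q ≠ j → M t q = U t q := by
    intro t q hqi hqj
    rw [hMent, Finset.sum_eq_single q]
    · rw [hdiag q hqi hqj, mul_one]
    · intro k _ hk
      rw [hoff q k (Ne.symm hk) (fun h => hqi h.1) (fun h => hqj h.1), mul_zero]
    · intro h; exact absurd (Finset.mem_univ q) h
  have hGi0 : ∀ k, k ≠ i → k ≠ j → G i k = 0 := fun k hki hkj =>
    hoff i k (Ne.symm hki) (fun h => hkj h.2) (fun h => hne h.1)
  have hGj0 : ∀ k, k ≠ i → k ≠ j → G j k = 0 := fun k hki hkj =>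
    hoff j k (Ne.symm hkj) (fun h => hne h.1.symm) (fun h => hki h.2)
  have hMi : ∀ t, M t i = U t i * G i i + U t j * G i j := by
    intro t
    rw [hMent, sum_two_aux i j hne _ (fun k hki hkj => by rw [hGi0 k hki hkj, mul_zero])]
  have hMj : ∀ t, M t j = U t i * G j i + U t j * G j j := by
    intro t
    rw [hMent, sum_two_aux i j hne _ (fun k hki hkj => by rw [hGj0 k hki hkj, mul_zero])]
  -- row-wise norm preservation on columns i, j
  have hrow : ∀ t, M t i ^ 2 + M t j ^ 2 = U t i ^ 2 + U t j ^ 2 := by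
    intro t
    rcases hblk with ⟨h1, h2, h3, h4⟩ | ⟨h1, h2, h3, h4⟩ <;>
      rw [hMi, hMj, h1, h2, h3, h4] <;>
      linear_combination (U t i ^ 2 + U t j ^ 2) * hcs
  -- Frobenius norm preserved
  have hfrob : frobSq M = frobSq U := by
    unfold frobSq
    refine Finset.sum_congr rfl fun t _ => ?_
    rw [← sub_eq_zero, ← Finset.sum_sub_distrib]
    rw [sum_two_aux i j hne _ (fun k hki hkj => by rw [hMq t k hki hkj, sub_self])]
    linarith [hrow t]
  -- diagonal difference
  have hdiagsum : ∑ t, (U t t ^ 2 - M t t ^ 2) =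
      (U i i ^ 2 - M i i ^ 2) + (U j j ^ 2 - M j j ^ 2) := by
    exact sum_two_aux i j hne _ (fun k hki hkj => by rw [hMq k k hki hkj, sub_self])
  -- trace condition
  have htr : M i i + M j j = N := by
    have h : G i i * U i i + G j i * U j i + (G i j * U i j + G j j * U j j) = N := by
      simpa [sub2, Matrix.trace, Matrix.diag, Matrix.mul_apply, Fin.sum_univ_two] using hopt
    rw [hMi, hMj]
    linear_combination h
  have hkey : (1 / 2 : ℝ) * N ^ 2 ≤ M i i ^ 2 + M j j ^ 2 := by
    rw [← htr]
    nlinarith [sq_nonneg (M i i - M j j)]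
  have hofM : offSq M = frobSq M - ∑ t, M t t ^ 2 := offSq_eq M
  have hofU : offSq U = frobSq U - ∑ t, U t t ^ 2 := offSq_eq U
  have hsplit : ∑ t, (U t t ^ 2) - ∑ t, (M t t ^ 2) =
      (U i i ^ 2 - M i i ^ 2) + (U j j ^ 2 - M j j ^ 2) := by
    rw [← Finset.sum_sub_distrib]; exact hdiagsum
  have : offSq M = offSq U + (U i i ^ 2 - M i i ^ 2) + (U j j ^ 2 - M j j ^ 2) := by
    rw [hofM, hofU, hfrob]; linarith
  rw [this]
  nlinarith
end

section
/- (Theorem 5) Let U and Ū be real orthogonal d×d matrices with columns u₁, …, u_d and ū₁, …, ū_d respectively, and assume u_iᵀ ū_i ≥ 0 for all i = 1, …, d. Set ε_min = min_i u_iᵀ ū_i. Then the operator norm of the error matrix satisfies ‖U − Ū‖₂ ≤ 1 − ε_min + √((d − 1)·(1 − ε_min²)). -/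
open Matrix

lemma euclid_norm_sq {d : ℕ} (x : EuclideanSpace ℝ (Fin d)) :
    ‖x‖ ^ 2 = ∑ q, (x q) ^ 2 := by
  rw [EuclideanSpace.norm_eq, Real.sq_sqrt (by positivity)]
  simp [Real.norm_eq_abs, sq_abs]

lemma opnorm_le_of_sq {d : ℕ} (A : Matrix (Fin d) (Fin d) ℝ) {K : ℝ} (hK : 0 ≤ K)
    (h : ∀ x : Fin d → ℝ, ∑ j, (∑ q, A j q * x q) ^ 2 ≤ K ^ 2 * ∑ q, (x q) ^ 2) :
    ‖Matrix.toEuclideanCLM (𝕜 := ℝ) A‖ ≤ K := by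
  apply ContinuousLinearMap.opNorm_le_bound _ hK
  intro x
  have hx : (0:ℝ) ≤ K * ‖x‖ := by positivity
  rw [← Real.sqrt_sq (norm_nonneg _), ← Real.sqrt_sq hx]
  apply Real.sqrt_le_sqrt
  rw [euclid_norm_sq, mul_pow, euclid_norm_sq]
  have := h (fun q => x q)
  simpa [Matrix.ofLp_toEuclideanCLM, Matrix.mulVec, dotProduct] using
    (by
      have key : ∀ j, (Matrix.toEuclideanCLM (𝕜 := ℝ) A x) j = ∑ q, A j q * x q := by
        intro j
        have := Matrix.ofLp_toEuclideanCLM (𝕜 := ℝ) A x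
        have h2 := congrFun this j
        simpa [Matrix.mulVec, dotProduct] using h2
      calc ∑ j, ((Matrix.toEuclideanCLM (𝕜 := ℝ) A x) j) ^ 2
          = ∑ j, (∑ q, A j q * x q) ^ 2 := by simp [key]
        _ ≤ K ^ 2 * ∑ q, (x q) ^ 2 := h (fun q => x q))

lemma weighted_cs {d : ℕ} (a x : Fin d → ℝ) :
    (∑ q, a q * x q) ^ 2 ≤ (∑ q, |a q|) * (∑ q, |a q| * (x q) ^ 2) := by
  have h1 : (∑ q, a q * x q) ^ 2 ≤ (∑ q, |a q| * |x q|) ^ 2 := by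
    rw [← sq_abs (∑ q, a q * x q)]
    apply pow_le_pow_left₀ (abs_nonneg _)
    calc |∑ q, a q * x q| ≤ ∑ q, |a q * x q| := Finset.abs_sum_le_sum_abs _ _
      _ = ∑ q, |a q| * |x q| := by simp [abs_mul]
  refine h1.trans ?_
  have h2 := Finset.sum_mul_sq_le_sq_mul_sq Finset.univ
    (fun q => Real.sqrt (|a q|)) (fun q => Real.sqrt (|a q|) * |x q|)
  have e1 : ∀ q : Fin d, Real.sqrt (|a q|) * (Real.sqrt (|a q|) * |x q|) = |a q| * |x q| := by
    intro q
    rw [← mul_assoc, Real.mul_self_sqrt (abs_nonneg _)]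
  have e2 : ∀ q : Fin d, Real.sqrt (|a q|) ^ 2 = |a q| := fun q => Real.sq_sqrt (abs_nonneg _)
  have e3 : ∀ q : Fin d, (Real.sqrt (|a q|) * |x q|) ^ 2 = |a q| * (x q) ^ 2 := by
    intro q
    rw [mul_pow, Real.sq_sqrt (abs_nonneg _), sq_abs]
  calc (∑ q, |a q| * |x q|) ^ 2
      = (∑ q, Real.sqrt (|a q|) * (Real.sqrt (|a q|) * |x q|)) ^ 2 := by
        simp_rw [e1]
    _ ≤ (∑ q, Real.sqrt (|a q|) ^ 2) * ∑ q, (Real.sqrt (|a q|) * |x q|) ^ 2 := h2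
    _ = (∑ q, |a q|) * (∑ q, |a q| * (x q) ^ 2) := by simp_rw [e2, e3]

lemma schur_bound {d : ℕ} (A : Matrix (Fin d) (Fin d) ℝ) {R : ℝ} (hR0 : 0 ≤ R)
    (hrow : ∀ t, ∑ q, |A t q| ≤ R) (hcol : ∀ q, ∑ t, |A t q| ≤ R) :
    ‖Matrix.toEuclideanCLM (𝕜 := ℝ) A‖ ≤ R := by
  apply opnorm_le_of_sq A hR0
  intro x
  calc ∑ j, (∑ q, A j q * x q) ^ 2
      ≤ ∑ j, (∑ q, |A j q|) * (∑ q, |A j q| * (x q) ^ 2) := by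
        exact Finset.sum_le_sum fun j _ => weighted_cs (fun q => A j q) x
    _ ≤ ∑ j, R * (∑ q, |A j q| * (x q) ^ 2) := by
        apply Finset.sum_le_sum
        intro j _
        apply mul_le_mul_of_nonneg_right (hrow j)
        positivity
    _ = R * ∑ q, (∑ j, |A j q|) * (x q) ^ 2 := by
        rw [← Finset.mul_sum, Finset.sum_comm]
        simp_rw [Finset.sum_mul]
    _ ≤ R * ∑ q, R * (x q) ^ 2 := by
        apply mul_le_mul_of_nonneg_left _ hR0
        apply Finset.sum_le_sum
        intro q _
        exact mul_le_mul_of_nonneg_right (hcol q) (by positivity)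
    _ = R ^ 2 * ∑ q, (x q) ^ 2 := by
        rw [← Finset.mul_sum]; ring

lemma offrow_bound {d : ℕ} (w : Fin d → ℝ) (t : Fin d) (h1 : ∑ q, (w q) ^ 2 = 1)
    {ε : ℝ} (hε0 : 0 ≤ ε) (hεt : ε ≤ w t) :
    ∑ q ∈ Finset.univ.erase t, |w q| ≤ Real.sqrt (((d : ℝ) - 1) * (1 - ε ^ 2)) := by
  have hsq : (∑ q ∈ Finset.univ.erase t, |w q|) ^ 2 ≤ ((d : ℝ) - 1) * (1 - ε ^ 2) := by
    have hc := sq_sum_le_card_mul_sum_sq (s := Finset.univ.erase t) (f := fun q => |w q|)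
    have hcard : ((Finset.univ.erase t).card : ℝ) ≤ (d : ℝ) - 1 := by
      rw [Finset.card_erase_of_mem (Finset.mem_univ t), Finset.card_univ, Fintype.card_fin]
      have hd : 1 ≤ d := Fin.pos t
      rw [Nat.cast_sub hd]; simp
    have hsum : ∑ q ∈ Finset.univ.erase t, |w q| ^ 2 ≤ 1 - ε ^ 2 := by
      have h2 : ∑ q ∈ Finset.univ.erase t, (w q) ^ 2 + (w t) ^ 2 = 1 := by
        simpa [h1] using Finset.sum_erase_add Finset.univ (fun q => (w q) ^ 2) (Finset.mem_univ t)
      have hwt : ε ^ 2 ≤ (w t) ^ 2 := pow_le_pow_left₀ hε0 hεt 2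
      simp_rw [sq_abs]
      linarith
    calc (∑ q ∈ Finset.univ.erase t, |w q|) ^ 2
        ≤ ((Finset.univ.erase t).card : ℝ) * ∑ q ∈ Finset.univ.erase t, |w q| ^ 2 := hc
      _ ≤ ((d : ℝ) - 1) * (1 - ε ^ 2) := by
          apply mul_le_mul hcard hsum (by positivity)
          have hd : 1 ≤ d := Fin.pos t
          have : (1:ℝ) ≤ (d:ℝ) := by exact_mod_cast hd
          linarith
  have h0 : 0 ≤ ∑ q ∈ Finset.univ.erase t, |w q| := by positivity
  calc ∑ q ∈ Finset.univ.erase t, |w q| = Real.sqrt ((∑ q ∈ Finset.univ.erase t, |w q|) ^ 2) := (Real.sqrt_sq h0).symm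
    _ ≤ Real.sqrt (((d : ℝ) - 1) * (1 - ε ^ 2)) := Real.sqrt_le_sqrt hsq

lemma orth_norm_le_one {d : ℕ} (A : Matrix (Fin d) (Fin d) ℝ) (hA : Aᵀ * A = 1) :
    ‖Matrix.toEuclideanCLM (𝕜 := ℝ) A‖ ≤ 1 := by
  have hstar : Aᴴ * A = 1 := by
    rw [Matrix.conjTranspose_eq_transpose_of_trivial, hA]
  have hmap : star (Matrix.toEuclideanCLM (𝕜 := ℝ) A) * Matrix.toEuclideanCLM (𝕜 := ℝ) A = 1 := by
    rw [← map_star, ← _root_.map_mul, Matrix.star_eq_conjTranspose, hstar, _root_.map_one]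
  have hcs := CStarRing.norm_star_mul_self (x := Matrix.toEuclideanCLM (𝕜 := ℝ) A)
  rw [hmap] at hcs
  have h1 : ‖(1 : EuclideanSpace ℝ (Fin d) →L[ℝ] EuclideanSpace ℝ (Fin d))‖ ≤ 1 :=
    ContinuousLinearMap.norm_id_le
  nlinarith [norm_nonneg (Matrix.toEuclideanCLM (𝕜 := ℝ) A)]

/-- Theorem 5: if `U, Ū` are real orthogonal with columns satisfying `uᵢᵀ ūᵢ ≥ 0` for all
`i`, and `ε_min = min_i uᵢᵀ ūᵢ`, then `‖U − Ū‖₂ ≤ 1 − ε_min + √((d−1)(1 − ε_min²))`. -/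
theorem stmt14 {d : ℕ} (U Ubar : Matrix (Fin d) (Fin d) ℝ)
    (hU : Uᵀ * U = 1) (hUbar : Ubarᵀ * Ubar = 1)
    (hpos : ∀ i : Fin d, 0 ≤ ∑ t, U t i * Ubar t i)
    (εmin : ℝ)
    (hε : IsLeast {x : ℝ | ∃ i : Fin d, x = ∑ t, U t i * Ubar t i} εmin) :
    ‖Matrix.toEuclideanCLM (𝕜 := ℝ) (U - Ubar)‖ ≤
      1 - εmin + Real.sqrt (((d : ℝ) - 1) * (1 - εmin ^ 2)) := by
  classical
  set W : Matrix (Fin d) (Fin d) ℝ := Ubarᵀ * U with hWdef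
  set D : Matrix (Fin d) (Fin d) ℝ := Matrix.diagonal (fun i => W i i) with hDdef
  have hUbar' : Ubar * Ubarᵀ = 1 := mul_eq_one_comm.mp hUbar
  have hWtW : Wᵀ * W = 1 := by
    rw [hWdef, Matrix.transpose_mul, Matrix.transpose_transpose, Matrix.mul_assoc,
      ← Matrix.mul_assoc Ubar, hUbar', Matrix.one_mul, hU]
  have hWWt : W * Wᵀ = 1 := mul_eq_one_comm.mp hWtW
  have hWdiag : ∀ i, W i i = ∑ t, U t i * Ubar t i := by
    intro i
    simp [hWdef, Matrix.mul_apply, Matrix.transpose_apply, mul_comm]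
  have hrow1 : ∀ t, ∑ q, (W t q) ^ 2 = 1 := by
    intro t
    have h := congrFun (congrFun hWWt t) t
    simpa [Matrix.mul_apply, Matrix.one_apply, pow_two] using h
  have hcol1 : ∀ q, ∑ t, (W t q) ^ 2 = 1 := by
    intro q
    have h := congrFun (congrFun hWtW q) q
    simpa [Matrix.mul_apply, Matrix.one_apply, pow_two] using h
  have hε0 : ∀ i, 0 ≤ W i i := fun i => (hWdiag i) ▸ hpos i
  have hε1 : ∀ i, W i i ≤ 1 := by
    intro i
    have h2 : (W i i) ^ 2 ≤ ∑ q, (W i q) ^ 2 :=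
      Finset.single_le_sum (f := fun q => (W i q) ^ 2) (fun q _ => sq_nonneg _) (Finset.mem_univ i)
    rw [hrow1 i] at h2
    nlinarith [hε0 i]
  obtain ⟨i0, hi0⟩ := hε.1
  have hεminle : ∀ i, εmin ≤ W i i := fun i => (hWdiag i) ▸ hε.2 ⟨i, rfl⟩
  have hεmin0 : 0 ≤ εmin := hi0 ▸ hpos i0
  have hεmin1 : εmin ≤ 1 := (hεminle i0).trans (hε1 i0)
  -- the diagonal part
  have hDentry : ∀ t q, (D - 1) t q = if t = q then W t t - 1 else 0 := by
    intro t q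
    by_cases h : t = q
    · subst h; simp [hDdef, Matrix.sub_apply, Matrix.diagonal_apply_eq, Matrix.one_apply_eq]
    · simp [hDdef, Matrix.sub_apply, Matrix.diagonal_apply_ne _ h, Matrix.one_apply_ne h, h]
  have hDsum : ∀ t, ∑ q, |(D - 1) t q| = 1 - W t t := by
    intro t
    calc ∑ q, |(D - 1) t q| = ∑ q, if t = q then 1 - W t t else 0 := by
          apply Finset.sum_congr rfl
          intro q _
          rw [hDentry]
          by_cases h : t = q
          · simp [h, abs_of_nonpos (by linarith [hε1 q] : W q q - 1 ≤ 0)]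
          · simp [h]
      _ = 1 - W t t := by simp
  have hDsum' : ∀ q, ∑ t, |(D - 1) t q| = 1 - W q q := by
    intro q
    calc ∑ t, |(D - 1) t q| = ∑ t, if t = q then 1 - W q q else 0 := by
          apply Finset.sum_congr rfl
          intro t _
          rw [hDentry]
          by_cases h : t = q
          · subst h; simp [abs_of_nonpos (by linarith [hε1 t] : W t t - 1 ≤ 0)]
          · simp [h]
      _ = 1 - W q q := by simp
  have hdiag : ‖Matrix.toEuclideanCLM (n := Fin d) (𝕜 := ℝ) (D - 1)‖ ≤ 1 - εmin := by
    apply schur_bound _ (by linarith)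
    · intro t; rw [hDsum t]; linarith [hεminle t]
    · intro q; rw [hDsum' q]; linarith [hεminle q]
  -- the off-diagonal part
  have hWDentry : ∀ t q, (W - D) t q = if t = q then 0 else W t q := by
    intro t q
    by_cases h : t = q
    · subst h; simp [hDdef, Matrix.sub_apply, Matrix.diagonal_apply_eq]
    · simp [hDdef, Matrix.sub_apply, Matrix.diagonal_apply_ne _ h, h]
  have hoff : ‖Matrix.toEuclideanCLM (n := Fin d) (𝕜 := ℝ) (W - D)‖ ≤
      Real.sqrt (((d : ℝ) - 1) * (1 - εmin ^ 2)) := by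
    apply schur_bound _ (Real.sqrt_nonneg _)
    · intro t
      have he : ∑ q, |(W - D) t q| = ∑ q ∈ Finset.univ.erase t, |W t q| := by
        rw [← Finset.sum_erase_add _ _ (Finset.mem_univ t)]
        have h0 : (W - D) t t = 0 := by rw [hWDentry]; simp
        rw [h0, abs_zero, add_zero]
        exact Finset.sum_congr rfl fun q hq => by
          rw [hWDentry, if_neg (Ne.symm (Finset.ne_of_mem_erase hq))]
      rw [he]
      exact offrow_bound (fun q => W t q) t (hrow1 t) hεmin0 (hεminle t)
    · intro q
      have he : ∑ t, |(W - D) t q| = ∑ t ∈ Finset.univ.erase q, |W t q| := by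
        rw [← Finset.sum_erase_add _ _ (Finset.mem_univ q)]
        have h0 : (W - D) q q = 0 := by rw [hWDentry]; simp
        rw [h0, abs_zero, add_zero]
        exact Finset.sum_congr rfl fun t ht => by
          rw [hWDentry, if_neg (Finset.ne_of_mem_erase ht)]
      rw [he]
      exact offrow_bound (fun t => W t q) q (hcol1 q) hεmin0 (hεminle q)
  -- assemble
  have hdecomp : U - Ubar = Ubar * ((D - 1) + (W - D)) := by
    have h : Ubar * W = U := by
      rw [hWdef, ← Matrix.mul_assoc, hUbar', Matrix.one_mul]
    have h2 : (D - 1) + (W - D) = W - 1 := by abel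
    rw [h2, Matrix.mul_sub, h, Matrix.mul_one]
  rw [hdecomp, _root_.map_mul]
  calc ‖Matrix.toEuclideanCLM (n := Fin d) (𝕜 := ℝ) Ubar * Matrix.toEuclideanCLM (n := Fin d) (𝕜 := ℝ) ((D - 1) + (W - D))‖
      ≤ ‖Matrix.toEuclideanCLM (n := Fin d) (𝕜 := ℝ) Ubar‖ *
        ‖Matrix.toEuclideanCLM (n := Fin d) (𝕜 := ℝ) ((D - 1) + (W - D))‖ := norm_mul_le _ _
    _ ≤ 1 * ((1 - εmin) + Real.sqrt (((d : ℝ) - 1) * (1 - εmin ^ 2))) := by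
        apply mul_le_mul (orth_norm_le_one Ubar hUbar) ?_ (norm_nonneg _) zero_le_one
        calc ‖Matrix.toEuclideanCLM (n := Fin d) (𝕜 := ℝ) ((D - 1) + (W - D))‖
            ≤ ‖Matrix.toEuclideanCLM (n := Fin d) (𝕜 := ℝ) (D - 1)‖ +
              ‖Matrix.toEuclideanCLM (n := Fin d) (𝕜 := ℝ) (W - D)‖ := by
              rw [map_add]; exact norm_add_le _ _
          _ ≤ (1 - εmin) + Real.sqrt (((d : ℝ) - 1) * (1 - εmin ^ 2)) := add_le_add hdiag hoff
    _ = 1 - εmin + Real.sqrt (((d : ℝ) - 1) * (1 - εmin ^ 2)) := by ring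
end

section
/- Let Q be a real orthogonal d×d matrix with d ≥ 2, and let λ be any complex eigenvalue of I − Q. Then there exists an index i ∈ {1, …, d} such that |λ − (1 − Q_ii)| ≤ √((d − 1)·(1 − Q_ii²)). -/
open Matrix

/-- Gershgorin-type bound: if `Q` is a real orthogonal `d×d` matrix (`d ≥ 2`) and `λ` is
any complex eigenvalue of `I − Q`, then there is an index `i` such that
`|λ − (1 − Q_ii)| ≤ √((d − 1)(1 − Q_ii²))`. -/
theorem stmt18 {d : ℕ} (hd : 2 ≤ d) (Q : Matrix (Fin d) (Fin d) ℝ) (hQ : Qᵀ * Q = 1)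
    (z : ℂ) (v : Fin d → ℂ) (hv : v ≠ 0)
    (hev : (((1 : Matrix (Fin d) (Fin d) ℝ) - Q).map Complex.ofReal) *ᵥ v = z • v) :
    ∃ i : Fin d,
      ‖z - (1 - (Q i i : ℂ))‖ ≤
        Real.sqrt (((d : ℝ) - 1) * (1 - (Q i i) ^ 2)) := by
  set A := (((1 : Matrix (Fin d) (Fin d) ℝ) - Q).map Complex.ofReal)
  have hμ : Module.End.HasEigenvalue (Matrix.toLin' A) z := by
    apply Module.End.hasEigenvalue_of_hasEigenvector (x := v)
    refine ⟨Module.End.mem_eigenspace_iff.mpr ?_, hv⟩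
    simpa [Matrix.toLin'_apply] using hev
  obtain ⟨k, hk⟩ := eigenvalue_mem_ball hμ
  refine ⟨k, ?_⟩
  have hQQt : Q * Qᵀ = 1 := mul_eq_one_comm.mp hQ
  have hrow : ∑ j, Q k j ^ 2 = 1 := by
    have := congrFun (congrFun hQQt k) k
    simpa [Matrix.mul_apply, Matrix.one_apply, sq] using this
  have hAkk : A k k = (1 : ℂ) - (Q k k : ℂ) := by
    simp [A, Matrix.one_apply]
  have hAkj : ∀ j ∈ Finset.univ.erase k, ‖A k j‖ = |Q k j| := by
    intro j hj
    have hjk : j ≠ k := (Finset.mem_erase.mp hj).1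
    simp [A, Matrix.one_apply, hjk.symm, Complex.norm_real]
  have hdist : ‖z - (1 - (Q k k : ℂ))‖ ≤
      ∑ j ∈ Finset.univ.erase k, |Q k j| := by
    have := Metric.mem_closedBall.mp hk
    rw [Complex.dist_eq, hAkk] at this
    calc ‖z - (1 - (Q k k : ℂ))‖
        ≤ ∑ j ∈ Finset.univ.erase k, ‖A k j‖ := this
      _ = ∑ j ∈ Finset.univ.erase k, |Q k j| := Finset.sum_congr rfl hAkj
  refine hdist.trans ?_
  have hsum_sq : ∑ j ∈ Finset.univ.erase k, Q k j ^ 2 = 1 - Q k k ^ 2 := by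
    have := Finset.add_sum_erase Finset.univ (fun j => Q k j ^ 2) (Finset.mem_univ k)
    rw [hrow] at this
    linarith
  have hCS : (∑ j ∈ Finset.univ.erase k, |Q k j|) ^ 2 ≤
      ((d : ℝ) - 1) * (1 - Q k k ^ 2) := by
    have h := Finset.sum_mul_sq_le_sq_mul_sq (Finset.univ.erase k)
      (fun _ => (1 : ℝ)) (fun j => |Q k j|)
    simp only [one_mul, one_pow] at h
    have hcard : ((Finset.univ.erase k).card : ℝ) = (d : ℝ) - 1 := by
      rw [Finset.card_erase_of_mem (Finset.mem_univ k)]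
      simp
      rw [Nat.cast_sub (by omega)]
      simp
    calc (∑ j ∈ Finset.univ.erase k, |Q k j|) ^ 2
        ≤ (∑ _j ∈ Finset.univ.erase k, (1:ℝ)) * ∑ j ∈ Finset.univ.erase k, |Q k j| ^ 2 := h
      _ = ((d : ℝ) - 1) * (1 - Q k k ^ 2) := by
          rw [Finset.sum_const, nsmul_eq_mul, mul_one, hcard]
          congr 1
          rw [← hsum_sq]
          exact Finset.sum_congr rfl fun j _ => by rw [sq_abs]
  have hnn : 0 ≤ ∑ j ∈ Finset.univ.erase k, |Q k j| :=
    Finset.sum_nonneg fun j _ => abs_nonneg _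
  exact (Real.le_sqrt hnn ((sq_nonneg _).trans hCS)).mpr hCS
end
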